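/- The pseudo-rhombicuboctahedron is not congruent to the rhombicuboctahedron: there is no isometry of ℝ³ (equivalently, no A ∈ O(3) and translation vector t ∈ ℝ³ such that x ↦ A·x + t) mapping the set V onto the set V'. -/

import Mathlib

noncomputable def base : Fin 3 → ℝ := ![1, 1, 1 + Real.sqrt 2]

/-- The vertex set of the rhombicuboctahedron with edge length 2 centered at the origin:
all points whose coordinates are, in some order, `±1, ±1, ±(1 + √2)`
(all coordinate permutations combined with all choices of signs). -/
def V : Set (EuclideanSpace ℝ (Fin 3)) :=
  {v | ∃ σ : Equiv.Perm (Fin 3), ∃ ε : Fin 3 → ℝ,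
    (∀ i, ε i = 1 ∨ ε i = -1) ∧ ∀ i, v i = ε i * base (σ i)}

noncomputable def pt (a b c : ℝ) : EuclideanSpace ℝ (Fin 3) := WithLp.toLp 2 ![a, b, c]

/-- The four top-cupola vertices `(±1, ±1, 1 + √2)` of the rhombicuboctahedron
that get replaced. -/
noncomputable def Vtop : Set (EuclideanSpace ℝ (Fin 3)) :=
  {pt 1 1 (1 + Real.sqrt 2), pt 1 (-1) (1 + Real.sqrt 2),
   pt (-1) 1 (1 + Real.sqrt 2), pt (-1) (-1) (1 + Real.sqrt 2)}

/-- The four new top vertices `(±√2, 0, 1 + √2)` and `(0, ±√2, 1 + √2)`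
(the top square cupola rotated by 45° about the z-axis). -/
noncomputable def Vnew : Set (EuclideanSpace ℝ (Fin 3)) :=
  {pt (Real.sqrt 2) 0 (1 + Real.sqrt 2), pt (-Real.sqrt 2) 0 (1 + Real.sqrt 2),
   pt 0 (Real.sqrt 2) (1 + Real.sqrt 2), pt 0 (-Real.sqrt 2) (1 + Real.sqrt 2)}

/-- The vertex set of the pseudo-rhombicuboctahedron (elongated square gyrobicupola)
with edge length 2. -/
noncomputable def V' : Set (EuclideanSpace ℝ (Fin 3)) := (V \ Vtop) ∪ Vnew

/-- The action of a 3×3 real matrix on ℝ³ (as `EuclideanSpace ℝ (Fin 3)`). -/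
def act (A : Matrix (Fin 3) (Fin 3) ℝ) (v : EuclideanSpace ℝ (Fin 3)) :
    EuclideanSpace ℝ (Fin 3) := WithLp.toLp 2 (A.mulVec v)

/- ### Auxiliary lemmas -/

lemma aux_sqrt2_pos : (0:ℝ) < Real.sqrt 2 := Real.sqrt_pos.mpr (by norm_num)
lemma aux_sqrt2_sq : Real.sqrt 2 ^ 2 = 2 := Real.sq_sqrt (by norm_num)

open Matrix in
lemma aux_orth {A : Matrix (Fin 3) (Fin 3) ℝ} (hA : A ∈ Matrix.orthogonalGroup (Fin 3) ℝ)
    (v : Fin 3 → ℝ) : A.mulVec v ⬝ᵥ A.mulVec v = v ⬝ᵥ v := by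
  rw [Matrix.mem_orthogonalGroup_iff'] at hA
  rw [Matrix.dotProduct_mulVec, Matrix.vecMul_mulVec]
  rw [hA, Matrix.vecMul_one]

lemma aux_sum_sq_of_mem_V {v : EuclideanSpace ℝ (Fin 3)} (hv : v ∈ V) :
    ∑ i, (v i)^2 = 5 + 2 * Real.sqrt 2 := by
  obtain ⟨σ, ε, hε, h⟩ := hv
  have : ∀ i, (v i)^2 = (base (σ i))^2 := by
    intro i
    rcases hε i with h1 | h1 <;> rw [h i, h1] <;> ring
  simp only [this]
  rw [Equiv.sum_comp σ (fun i => (base i)^2)]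
  simp [Fin.sum_univ_three, base]
  nlinarith [aux_sqrt2_sq]

lemma aux_neg_mem_V {v : EuclideanSpace ℝ (Fin 3)} (hv : v ∈ V) : -v ∈ V := by
  obtain ⟨σ, ε, hε, h⟩ := hv
  refine ⟨σ, fun i => -ε i, fun i => ?_, fun i => ?_⟩
  · rcases hε i with h1 | h1 <;> simp [h1]
  · have h2 : (-v) i = -(v i) := rfl
    rw [h2, h i]; ring

open Matrix in
lemma aux_image_sum {A : Matrix (Fin 3) (Fin 3) ℝ}
    (hA : A ∈ Matrix.orthogonalGroup (Fin 3) ℝ) {t q : EuclideanSpace ℝ (Fin 3)}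
    (hq : q ∈ (fun x => act A x + t) '' V) :
    ∑ i, (q i - t i)^2 = 5 + 2 * Real.sqrt 2 := by
  obtain ⟨v, hv, heq⟩ := hq
  have h1 : ∀ i, q i - t i = A.mulVec v i := by
    intro i
    rw [← heq]
    simp [act]
  simp only [h1]
  have h2 : A.mulVec v ⬝ᵥ A.mulVec v = v ⬝ᵥ v := aux_orth hA v
  have h3 : (v : Fin 3 → ℝ) ⬝ᵥ v = 5 + 2 * Real.sqrt 2 := by
    rw [← aux_sum_sq_of_mem_V hv]
    simp [dotProduct, sq]
  rw [show ∑ i, (A.mulVec v i)^2 = A.mulVec v ⬝ᵥ A.mulVec v by simp [dotProduct, sq],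
    h2, h3]

lemma aux_neg_pt (a b c : ℝ) : -(pt a b c) = pt (-a) (-b) (-c) := by
  ext i; fin_cases i <;> simp [pt]

lemma aux_notin_Vtop {q : EuclideanSpace ℝ (Fin 3)} (h : q 2 ≠ 1 + Real.sqrt 2) :
    q ∉ Vtop := by
  intro hq
  simp only [Vtop, Set.mem_insert_iff, Set.mem_singleton_iff] at hq
  rcases hq with h1 | h1 | h1 | h1 <;> exact h (by rw [h1]; simp [pt])

lemma aux_mV1 : pt (1 + Real.sqrt 2) 1 1 ∈ V := by
  refine ⟨Equiv.swap 0 2, ![1, 1, 1], fun i => ?_, fun i => ?_⟩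
  · fin_cases i <;> simp
  · fin_cases i <;> simp [pt, base, Equiv.swap_apply_def]

lemma aux_mV3 : pt 1 (1 + Real.sqrt 2) 1 ∈ V := by
  refine ⟨Equiv.swap 1 2, ![1, 1, 1], fun i => ?_, fun i => ?_⟩
  · fin_cases i <;> simp
  · fin_cases i <;> simp [pt, base, Equiv.swap_apply_def]

lemma aux_mV5 : pt (1 + Real.sqrt 2) 1 (-1) ∈ V := by
  refine ⟨Equiv.swap 0 2, ![1, 1, -1], fun i => ?_, fun i => ?_⟩
  · fin_cases i <;> simp
  · fin_cases i <;> simp [pt, base, Equiv.swap_apply_def]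

lemma aux_one_ne : (1:ℝ) ≠ 1 + Real.sqrt 2 := by nlinarith [aux_sqrt2_pos]
lemma aux_negone_ne : (-1:ℝ) ≠ 1 + Real.sqrt 2 := by nlinarith [aux_sqrt2_pos]

lemma aux_mem_V' {q : EuclideanSpace ℝ (Fin 3)} (hq : q ∈ V) (h2 : q 2 ≠ 1 + Real.sqrt 2) :
    q ∈ V' := Or.inl ⟨hq, aux_notin_Vtop h2⟩

/-- The pseudo-rhombicuboctahedron is not congruent to the rhombicuboctahedron:
no isometry of ℝ³, i.e. no map `x ↦ A·x + t` with `A ∈ O(3)` and `t ∈ ℝ³`,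
maps `V` onto `V'`. -/
theorem pseudoRhombicuboctahedron_not_congruent :
    ¬ ∃ A : Matrix (Fin 3) (Fin 3) ℝ, A ∈ Matrix.orthogonalGroup (Fin 3) ℝ ∧
      ∃ t : EuclideanSpace ℝ (Fin 3), (fun x => act A x + t) '' V = V' := by
  rintro ⟨A, hA, t, himg⟩
  have hs := aux_sqrt2_sq
  have hsp := aux_sqrt2_pos
  set s := Real.sqrt 2 with hsdef
  -- the six "ring" points, in V'
  have hq1 : pt (1 + s) 1 1 ∈ V' := aux_mem_V' aux_mV1 (by simpa [pt] using aux_one_ne)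
  have hq3 : pt 1 (1 + s) 1 ∈ V' := aux_mem_V' aux_mV3 (by simpa [pt] using aux_one_ne)
  have hq5 : pt (1 + s) 1 (-1) ∈ V' := aux_mem_V' aux_mV5 (by simpa [pt] using aux_negone_ne)
  have hq2 : pt (-(1 + s)) (-1) (-1) ∈ V' := by
    have h := aux_mem_V' (aux_neg_mem_V aux_mV1) (by simpa [aux_neg_pt, pt] using aux_negone_ne)
    rwa [aux_neg_pt] at h
  have hq4 : pt (-1) (-(1 + s)) (-1) ∈ V' := by
    have h := aux_mem_V' (aux_neg_mem_V aux_mV3) (by simpa [aux_neg_pt, pt] using aux_negone_ne)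
    rwa [aux_neg_pt] at h
  have hq6 : pt (-(1 + s)) (-1) (-(-1) : ℝ) ∈ V' := by
    have h := aux_mem_V' (aux_neg_mem_V aux_mV5) (by simpa [aux_neg_pt, pt] using aux_one_ne)
    rwa [aux_neg_pt] at h
  -- hence they are in the image, giving norm equations
  have key : ∀ q ∈ V', ∑ i, (q i - t i)^2 = 5 + 2 * s := by
    intro q hq
    exact aux_image_sum hA (himg ▸ hq)
  have h1 := key _ hq1
  have h2 := key _ hq2
  have h3 := key _ hq3
  have h4 := key _ hq4
  have h5 := key _ hq5
  have h6 := key _ hq6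
  simp only [Fin.sum_univ_three, pt, PiLp.toLp_apply, Matrix.cons_val_zero, Matrix.cons_val_one,
    Matrix.head_cons, Matrix.cons_val_two, Matrix.tail_cons] at h1 h2 h3 h4 h5 h6
  -- deduce t = 0
  have e1 : (1 + s) * t 0 + t 1 + t 2 = 0 := by linear_combination (h2 - h1) / 4
  have e2 : t 0 + (1 + s) * t 1 + t 2 = 0 := by linear_combination (h4 - h3) / 4
  have e3 : (1 + s) * t 0 + t 1 - t 2 = 0 := by linear_combination (h6 - h5) / 4
  have ht2 : t 2 = 0 := by linear_combination (e1 - e3) / 2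
  have keyt : (2 + 2 * s) * t 0 = 0 := by
    linear_combination (1 + s) * e1 - e2 - t 0 * hs - s * ht2
  have ht0 : t 0 = 0 := by
    rcases mul_eq_zero.mp keyt with h | h
    · nlinarith
    · exact h
  have ht1 : t 1 = 0 := by linear_combination e1 - (1 + s) * ht0 - ht2
  have htz : ∀ i : Fin 3, t i = 0 := by
    intro i; fin_cases i <;> assumption
  -- the new top vertex and its antipode
  have hp : pt s 0 (1 + s) ∈ V' := Or.inr (by simp [Vnew, hsdef])
  rw [← himg] at hp
  obtain ⟨v, hv, hveq⟩ := hp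
  have hcontra : pt (-s) (-0 : ℝ) (-(1 + s)) ∈ V' := by
    rw [← aux_neg_pt, ← himg]
    refine ⟨-v, aux_neg_mem_V hv, ?_⟩
    ext i
    have h0 : act A v i + t i = pt s 0 (1 + s) i := congrArg (fun w => w i) hveq
    show act A (-v) i + t i = -(pt s 0 (1 + s)) i
    have hneg : act A (-v) i = -(act A v i) := by
      show (A.mulVec (-v)) i = -(A.mulVec v i)
      rw [Matrix.mulVec_neg]; rfl
    rw [hneg]
    rw [htz i] at h0 ⊢
    linarith [h0]
  rcases hcontra with ⟨hVmem, -⟩ | hnew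
  · obtain ⟨σ, ε, hε, h⟩ := hVmem
    have h1' := h 1
    have hb : (0:ℝ) < base (σ 1) := by
      have : ∀ j : Fin 3, (0:ℝ) < base j := by
        intro j; fin_cases j <;> simp [base] <;> linarith
      exact this (σ 1)
    have hptv : pt (-s) (-0 : ℝ) (-(1 + s)) 1 = 0 := by simp [pt]
    rw [hptv] at h1'
    rcases hε 1 with he | he <;> rw [he] at h1' <;> nlinarith
  · simp only [Vnew, Set.mem_insert_iff, Set.mem_singleton_iff] at hnew
    rcases hnew with h' | h' | h' | h' <;>
    · have := congrArg (fun w => w 2) h'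
      simp [pt] at this
      linarith
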